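/- Power gain of the t test from correlated errors for small signals (Supplementary Lemma, part 1): Let α ∈ (0,1) and z_α = Φ^{−1}(1−α). For every ρ ∈ (0,1) and every h with 0 < h ≤ (1/2)·√(1−ρ)·(z_α + √(z_α² + 12)), one has Δπ(h, ρ) > 0, i.e. E[Φ(h·(ρT + 1 − ρ)^{−1/2} − z_α)] > Φ(h − z_α), where T is a chi-squared random variable with 1 degree of freedom. -/

import Mathlib

open MeasureTheory ProbabilityTheory Filter

/-- Standard normal cumulative distribution function `Φ`. -/
noncomputable def stdGaussCDF (t : ℝ) : ℝ :=
  ((gaussianReal 0 1) (Set.Iic t)).toReal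


namespace PowerGainAux

open Real Set

noncomputable def stdPDF (x : ℝ) : ℝ := (Real.sqrt (2 * Real.pi))⁻¹ * Real.exp (-x ^ 2 / 2)

lemma gaussianPDFReal_zero_one (x : ℝ) : gaussianPDFReal 0 1 x = stdPDF x := by
  norm_num [gaussianPDFReal, stdPDF]

lemma continuous_gaussianPDFReal01 : Continuous (gaussianPDFReal 0 1) := by
  rw [gaussianPDFReal_def]; fun_prop

lemma stdPDF_pos (x : ℝ) : 0 < stdPDF x := by
  rw [← gaussianPDFReal_zero_one]; exact gaussianPDFReal_pos 0 1 x one_ne_zero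

lemma continuous_stdPDF : Continuous stdPDF := by
  unfold stdPDF; fun_prop

lemma stdGaussCDF_eq (t : ℝ) : stdGaussCDF t = ∫ x in Set.Iic t, gaussianPDFReal 0 1 x := by
  rw [stdGaussCDF, gaussianReal_apply_eq_integral 0 one_ne_zero,
    ENNReal.toReal_ofReal (setIntegral_nonneg measurableSet_Iic fun x _ => gaussianPDFReal_nonneg 0 1 x)]

lemma hasDerivAt_stdGaussCDF (t : ℝ) : HasDerivAt stdGaussCDF (stdPDF t) t := by
  have hint := integrable_gaussianPDFReal 0 1
  have key : stdGaussCDF = fun s => (∫ x in Set.Iic (0:ℝ), gaussianPDFReal 0 1 x) +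
      ∫ x in (0:ℝ)..s, gaussianPDFReal 0 1 x := by
    funext s
    rw [stdGaussCDF_eq, ← intervalIntegral.integral_Iic_sub_Iic hint.integrableOn hint.integrableOn]
    ring
  rw [key]
  have H : HasDerivAt (fun s => ∫ x in (0:ℝ)..s, gaussianPDFReal 0 1 x) (gaussianPDFReal 0 1 t) t :=
    intervalIntegral.integral_hasDerivAt_right hint.intervalIntegrable
      (continuous_gaussianPDFReal01.stronglyMeasurable.stronglyMeasurableAtFilter)
      continuous_gaussianPDFReal01.continuousAt
  simpa [gaussianPDFReal_zero_one] using H.const_add (∫ x in Set.Iic (0:ℝ), gaussianPDFReal 0 1 x)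

lemma continuous_stdGaussCDF : Continuous stdGaussCDF :=
  continuous_iff_continuousAt.2 fun t => (hasDerivAt_stdGaussCDF t).continuousAt

lemma stdGaussCDF_nonneg (t : ℝ) : 0 ≤ stdGaussCDF t := ENNReal.toReal_nonneg

lemma stdGaussCDF_le_one (t : ℝ) : stdGaussCDF t ≤ 1 := by
  rw [stdGaussCDF]
  have h1 : (gaussianReal 0 1) (Set.Iic t) ≤ 1 := prob_le_one
  exact le_trans (ENNReal.toReal_mono ENNReal.one_ne_top h1) (by simp)

lemma hasDerivAt_stdPDF (x : ℝ) : HasDerivAt stdPDF (-x * stdPDF x) x := by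
  have h1 : HasDerivAt (fun y : ℝ => -y^2/2) (-x) x := by
    have := ((hasDerivAt_pow 2 x).neg.div_const 2)
    simpa using this.congr_deriv (by ring)
  have h2 := (h1.exp).const_mul (Real.sqrt (2*Real.pi))⁻¹
  refine h2.congr_deriv ?_
  simp only [stdPDF]; ring


section Deriv

variable {ρ h zα : ℝ}

noncomputable def qf (ρ t : ℝ) : ℝ := Real.sqrt (ρ*t+1-ρ)

noncomputable def gfun (ρ h zα t : ℝ) : ℝ := stdGaussCDF (h / qf ρ t - zα)

noncomputable def g1 (ρ h zα t : ℝ) : ℝ :=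
  stdPDF (h / qf ρ t - zα) * (-(h*ρ)/2 * ((qf ρ t)⁻¹)^3)

noncomputable def g2 (ρ h zα t : ℝ) : ℝ :=
  stdPDF (h / qf ρ t - zα) * (h*ρ^2/4) * ((qf ρ t)⁻¹)^6 *
    (3 * qf ρ t - h * (h / qf ρ t - zα))

lemma qf_pos {t : ℝ} (ht : 0 < ρ*t+1-ρ) : 0 < qf ρ t := Real.sqrt_pos.2 ht

lemma hasDerivAt_qf {t : ℝ} (ht : 0 < ρ*t+1-ρ) :
    HasDerivAt (qf ρ) (ρ / (2 * qf ρ t)) t := by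
  have hs : HasDerivAt (fun y : ℝ => ρ*y+1-ρ) ρ t := by
    simpa using (((hasDerivAt_id t).const_mul ρ).add_const 1).sub_const ρ
  have := (Real.hasDerivAt_sqrt ht.ne').comp t hs
  refine this.congr_deriv ?_
  unfold qf; ring

lemma hasDerivAt_ufun {t : ℝ} (ht : 0 < ρ*t+1-ρ) :
    HasDerivAt (fun y => h / qf ρ y - zα) (-(h*ρ)/2 * ((qf ρ t)⁻¹)^3) t := by
  have hqne := (qf_pos ht).ne'
  have H := (((hasDerivAt_qf ht).inv hqne).const_mul h).sub_const zα
  have : (fun y => h * (qf ρ y)⁻¹ - zα) = fun y => h / qf ρ y - zα := by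
    funext y; rw [div_eq_mul_inv]
  rw [← this]
  refine H.congr_deriv ?_
  field_simp

lemma hasDerivAt_gfun {t : ℝ} (ht : 0 < ρ*t+1-ρ) :
    HasDerivAt (gfun ρ h zα) (g1 ρ h zα t) t := by
  have H := (hasDerivAt_stdGaussCDF (h / qf ρ t - zα)).comp t (hasDerivAt_ufun ht)
  exact H

lemma hasDerivAt_g1 {t : ℝ} (ht : 0 < ρ*t+1-ρ) :
    HasDerivAt (g1 ρ h zα) (g2 ρ h zα t) t := by
  have hqne := (qf_pos ht).ne'
  have hA : HasDerivAt (fun y => stdPDF (h / qf ρ y - zα))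
      ((-(h / qf ρ t - zα) * stdPDF (h / qf ρ t - zα)) * (-(h*ρ)/2 * ((qf ρ t)⁻¹)^3)) t :=
    by have := (hasDerivAt_stdPDF (h / qf ρ t - zα)).comp t (hasDerivAt_ufun (h := h) (zα := zα) ht); exact this
  have hB : HasDerivAt (fun y => -(h*ρ)/2 * ((qf ρ y)⁻¹)^3)
      (-(h*ρ)/2 * (3 * ((qf ρ t)⁻¹)^2 * (-(ρ / (2 * qf ρ t)) / (qf ρ t)^2))) t := by
    exact ((((hasDerivAt_qf ht).inv hqne).pow 3).const_mul _)
  have H := hA.mul hB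
  refine H.congr_deriv ?_
  unfold g2
  set P := stdPDF (h / qf ρ t - zα) with hP
  field_simp
  ring

end Deriv


section Moments

lemma integrable_sq_mul_exp : Integrable (fun x : ℝ => x^2 * Real.exp (-x^2/2)) := by
  have := integrable_rpow_mul_exp_neg_mul_sq (by norm_num : (0:ℝ) < 1/2)
    (by norm_num : (-1:ℝ) < 2)
  refine this.congr ?_
  filter_upwards with x
  rw [show (-(1/2) * x^2 : ℝ) = -x^2/2 by ring]
  norm_cast

lemma integrable_exp_sq : Integrable (fun x : ℝ => Real.exp (-x^2/2)) := by
  have := integrable_exp_neg_mul_sq (by norm_num : (0:ℝ) < 1/2)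
  refine this.congr ?_
  filter_upwards with x
  rw [show (-(1/2) * x^2 : ℝ) = -x^2/2 by ring]

lemma tendsto_mul_exp_atTop : Tendsto (fun x : ℝ => x * Real.exp (-x^2/2)) atTop (nhds 0) := by
  have hO := rpow_mul_exp_neg_mul_sq_isLittleO_exp_neg (by norm_num : (0:ℝ) < 1/2) 1
  have hlin : Tendsto (fun x : ℝ => -(1/2) * x) atTop atBot := by
    apply Filter.Tendsto.const_mul_atTop_of_neg (by norm_num : (-(1/2) : ℝ) < 0) tendsto_id
  have h0 : Tendsto (fun x : ℝ => Real.exp (-(1/2) * x)) atTop (nhds 0) :=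
    Real.tendsto_exp_atBot.comp hlin
  have H := hO.trans_tendsto h0
  refine H.congr' ?_
  filter_upwards [eventually_ge_atTop (0:ℝ)] with x hx
  rw [Real.rpow_one, show (-(1/2) * x^2 : ℝ) = -x^2/2 by ring]

lemma integral_sq_mul_exp :
    ∫ x : ℝ, x^2 * Real.exp (-x^2/2) = Real.sqrt (2*Real.pi) := by
  set G : ℝ → ℝ := fun x => -x * Real.exp (-x^2/2) with hG
  have hderiv : ∀ x : ℝ, HasDerivAt G ((x^2 - 1) * Real.exp (-x^2/2)) x := by
    intro x
    have h1 : HasDerivAt (fun y : ℝ => -y^2/2) (-x) x := by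
      have := ((hasDerivAt_pow 2 x).neg.div_const 2)
      simpa using this.congr_deriv (by ring)
    have h2 := (hasDerivAt_neg x).mul h1.exp
    refine h2.congr_deriv ?_
    ring
  have hint : Integrable (fun x : ℝ => (x^2 - 1) * Real.exp (-x^2/2)) := by
    refine (integrable_sq_mul_exp.sub integrable_exp_sq).congr ?_
    filter_upwards with x
    simp only [Pi.sub_apply]; ring
  have htop : Tendsto G atTop (nhds 0) := by
    have h' := tendsto_mul_exp_atTop.neg
    rw [neg_zero] at h'
    refine h'.congr fun x => ?_
    simp only [hG]; ring
  have hbot : Tendsto G atBot (nhds 0) := by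
    have := tendsto_mul_exp_atTop.comp tendsto_neg_atBot_atTop
    refine this.congr ?_
    intro x; simp [hG, neg_sq]
  have hIoi : ∫ x in Set.Ioi (0:ℝ), (x^2 - 1) * Real.exp (-x^2/2) = 0 - G 0 := by
    refine MeasureTheory.integral_Ioi_of_hasDerivAt_of_tendsto
      (Continuous.continuousWithinAt (by fun_prop)) (fun x _ => hderiv x)
      hint.integrableOn htop
  have hIic : ∫ x in Set.Iic (0:ℝ), (x^2 - 1) * Real.exp (-x^2/2) = G 0 - 0 := by
    refine MeasureTheory.integral_Iic_of_hasDerivAt_of_tendsto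
      (Continuous.continuousWithinAt (by fun_prop)) (fun x _ => hderiv x)
      hint.integrableOn hbot
  have hsplit := intervalIntegral.integral_Iic_add_Ioi (μ := volume) (b := (0:ℝ)) hint.integrableOn hint.integrableOn
  have hzero : ∫ x : ℝ, (x^2 - 1) * Real.exp (-x^2/2) = 0 := by
    rw [← hsplit, hIoi, hIic]; ring
  have hsub : ∫ x : ℝ, (x^2 - 1) * Real.exp (-x^2/2)
      = (∫ x : ℝ, x^2 * Real.exp (-x^2/2)) - ∫ x : ℝ, Real.exp (-x^2/2) := by
    rw [← MeasureTheory.integral_sub integrable_sq_mul_exp integrable_exp_sq]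
    refine integral_congr_ae (Filter.Eventually.of_forall fun x => ?_)
    ring
  have hgauss : ∫ x : ℝ, Real.exp (-x^2/2) = Real.sqrt (2*Real.pi) := by
    have h1 := integral_gaussian (1/2)
    have h2 : Real.pi / (1/2) = 2 * Real.pi := by ring
    rw [h2] at h1
    rw [← h1]
    refine integral_congr_ae (Filter.Eventually.of_forall fun x => ?_)
    show Real.exp (-x^2/2) = Real.exp (-(1/2)*x^2)
    rw [show (-x^2/2 : ℝ) = -(1/2)*x^2 by ring]
  have hfin : (∫ x : ℝ, x^2 * Real.exp (-x^2/2)) - ∫ x : ℝ, Real.exp (-x^2/2) = 0 := by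
    rw [← hsub, hzero]
  linarith [hgauss]

lemma gaussianReal01_withDensity :
    gaussianReal 0 1 = volume.withDensity fun x => ((gaussianPDFReal 0 1 x).toNNReal : ENNReal) := by
  rw [gaussianReal_of_var_ne_zero 0 one_ne_zero]; rfl

lemma integral_gaussianReal_eq (g : ℝ → ℝ) :
    ∫ x, g x ∂(gaussianReal 0 1) = ∫ x, gaussianPDFReal 0 1 x * g x := by
  rw [gaussianReal01_withDensity,
    integral_withDensity_eq_integral_smul (measurable_gaussianPDFReal 0 1).real_toNNReal]
  congr 1; funext x
  rw [NNReal.smul_def, Real.coe_toNNReal _ (gaussianPDFReal_nonneg 0 1 x)]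
  rfl

lemma integrable_gaussianReal_iff {g : ℝ → ℝ} :
    Integrable g (gaussianReal 0 1) ↔ Integrable (fun x => gaussianPDFReal 0 1 x * g x) := by
  rw [gaussianReal01_withDensity,
    integrable_withDensity_iff_integrable_smul (measurable_gaussianPDFReal 0 1).real_toNNReal]
  constructor <;> intro H <;> refine H.congr ?_ <;> filter_upwards with x <;>
    rw [NNReal.smul_def, Real.coe_toNNReal _ (gaussianPDFReal_nonneg 0 1 x)] <;> rfl

lemma integrable_sq_gaussianReal : Integrable (fun x : ℝ => x^2) (gaussianReal 0 1) := by
  rw [integrable_gaussianReal_iff]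
  refine (integrable_sq_mul_exp.const_mul ((Real.sqrt (2*Real.pi))⁻¹)).congr ?_
  filter_upwards with x
  rw [gaussianPDFReal_zero_one]; unfold stdPDF; ring

lemma integral_sq_gaussianReal : ∫ x, x^2 ∂(gaussianReal 0 1) = 1 := by
  rw [integral_gaussianReal_eq]
  have : ∀ x : ℝ, gaussianPDFReal 0 1 x * x^2
      = (Real.sqrt (2*Real.pi))⁻¹ * (x^2 * Real.exp (-x^2/2)) := by
    intro x; rw [gaussianPDFReal_zero_one]; unfold stdPDF; ring
  simp_rw [this]
  rw [MeasureTheory.integral_const_mul, integral_sq_mul_exp]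
  rw [inv_mul_cancel₀]
  positivity

lemma gauss_Icc_pos {a b : ℝ} (hab : a < b) :
    0 < ((gaussianReal 0 1) (Set.Icc a b)).toReal := by
  rw [gaussianReal_apply_eq_integral 0 one_ne_zero,
    ENNReal.toReal_ofReal (setIntegral_nonneg measurableSet_Icc fun x _ => gaussianPDFReal_nonneg 0 1 x)]
  rw [MeasureTheory.integral_Icc_eq_integral_Ioc, ← intervalIntegral.integral_of_le hab.le]
  refine intervalIntegral.intervalIntegral_pos_of_pos_on
    ((integrable_gaussianPDFReal 0 1).intervalIntegrable)
    (fun x _ => gaussianPDFReal_pos 0 1 x one_ne_zero) hab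

end Moments


end PowerGainAux


set_option maxHeartbeats 2000000 in
open PowerGainAux Set in
/-- **Supplementary Lemma, part 1 (power gain from correlated errors for small
signals):** for `0 < h ≤ (1/2)·√(1−ρ)·(z_α + √(z_α² + 12))` one has `Δπ(h,ρ) > 0`,
i.e. `E[Φ(h·(ρT + 1 − ρ)^{−1/2} − z_α)] > Φ(h − z_α)` where `T ~ χ²₁` is realized as
the square of a standard normal random variable. -/
theorem power_gain_small_signal
    (α : ℝ) (hα : α ∈ Set.Ioo (0 : ℝ) 1)
    (zα : ℝ) (hzα : stdGaussCDF zα = 1 - α)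
    (ρ : ℝ) (hρ : ρ ∈ Set.Ioo (0 : ℝ) 1)
    (h : ℝ) (hpos : 0 < h)
    (hsmall : h ≤ (1 / 2) * Real.sqrt (1 - ρ) * (zα + Real.sqrt (zα ^ 2 + 12))) :
    stdGaussCDF (h - zα) <
      ∫ x, stdGaussCDF (h / Real.sqrt (ρ * x ^ 2 + 1 - ρ) - zα) ∂(gaussianReal 0 1) := by
  obtain ⟨hρ0, hρ1⟩ := hρ
  have h1ρ : (0:ℝ) < 1 - ρ := by linarith
  set b := Real.sqrt (1 - ρ) with hbdef
  have hbpos : 0 < b := Real.sqrt_pos.2 h1ρ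
  have hbsq : b^2 = 1 - ρ := Real.sq_sqrt h1ρ.le
  set w := Real.sqrt (zα^2 + 12) with hwdef
  have hwsq : w^2 = zα^2 + 12 := Real.sq_sqrt (by positivity)
  have hwpos : 0 < w := Real.sqrt_pos.2 (by positivity)
  have hzw : zα < w := by nlinarith [sq_nonneg (zα - w), sq_nonneg (zα + w)]
  have hkey : h * (w - zα) ≤ 6 * b := by
    have e1 := mul_le_mul_of_nonneg_right hsmall (by linarith : (0:ℝ) ≤ w - zα)
    have hb12 : b * w^2 = b * (zα^2 + 12) := by rw [hwsq]
    nlinarith [e1, hb12]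
  have hQ : ∀ x : ℝ, b ≤ x → 0 ≤ 3*x^2 + h*zα*x - h^2 := by
    intro x hx
    have hxpos : 0 < x := lt_of_lt_of_le hbpos hx
    have hK : 0 ≤ 6*x - h*(w - zα) := by nlinarith [hkey]
    have e2 : h*x*w^2 = h*x*(zα^2+12) := by rw [hwsq]
    nlinarith [mul_nonneg (mul_nonneg hxpos.le (by linarith : (0:ℝ) ≤ w - zα)) hK,
      mul_nonneg hpos.le hK, e2, sub_pos.2 hzw]
  set x₀ : ℝ := h*|zα| + h + 1 with hx₀def
  have hx₀pos : 0 < x₀ := by positivity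
  have hQs : ∀ x : ℝ, x₀ ≤ x → 0 < 3*x^2 + h*zα*x - h^2 := by
    intro x hx
    have h1 : 0 ≤ h*|zα| := by positivity
    have hx1 : (1:ℝ) ≤ x := by simp only [hx₀def] at hx; linarith
    have h2 : -|zα| ≤ zα := neg_abs_le zα
    nlinarith [mul_nonneg (mul_nonneg hpos.le (abs_nonneg zα)) (by linarith : (0:ℝ) ≤ x),
      mul_le_mul_of_nonneg_left hx (le_of_lt hpos),
      mul_le_mul_of_nonneg_right h2 (mul_pos hpos (lt_of_lt_of_le one_pos hx1)).le]
  -- basic facts about s(t) = ρt + 1 - ρ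
  have hspos : ∀ t : ℝ, 0 ≤ t → 0 < ρ*t+1-ρ := by intro t ht; nlinarith
  have hqb : ∀ t : ℝ, 0 ≤ t → b ≤ qf ρ t := by
    intro t ht
    exact Real.sqrt_le_sqrt (by nlinarith)
  -- g2 is nonnegative on [0, ∞)
  have hg2nn : ∀ t : ℝ, 0 ≤ t → 0 ≤ g2 ρ h zα t := by
    intro t ht
    have hs := hspos t ht
    have hq := qf_pos hs
    have hlast : 0 ≤ 3 * qf ρ t - h * (h / qf ρ t - zα) := by
      have e : 3 * qf ρ t - h * (h / qf ρ t - zα)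
          = (3*(qf ρ t)^2 + h*zα*(qf ρ t) - h^2) / qf ρ t := by
        field_simp; ring
      rw [e]
      exact div_nonneg (hQ _ (hqb t ht)) hq.le
    exact mul_nonneg (mul_nonneg (mul_nonneg (stdPDF_pos _).le (by positivity)) (by positivity)) hlast
  -- threshold t₀
  set t₀ : ℝ := max 1 (x₀^2 / ρ) with ht₀def
  have ht₀1 : (1:ℝ) ≤ t₀ := le_max_left _ _
  have ht₀0 : (0:ℝ) ≤ t₀ := by linarith
  have hqt : ∀ t : ℝ, t₀ ≤ t → x₀ ≤ qf ρ t := by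
    intro t ht
    have h1 : x₀^2 / ρ ≤ t := le_trans (le_max_right _ _) ht
    have h2 : x₀^2 ≤ ρ * t := by
      rw [div_le_iff₀ hρ0] at h1; linarith [h1]
    have : x₀^2 ≤ ρ*t+1-ρ := by linarith
    calc x₀ = Real.sqrt (x₀^2) := (Real.sqrt_sq hx₀pos.le).symm
    _ ≤ qf ρ t := Real.sqrt_le_sqrt this
  have hg2pos : ∀ t : ℝ, t₀ ≤ t → 0 < g2 ρ h zα t := by
    intro t ht
    have ht0 : (0:ℝ) ≤ t := le_trans ht₀0 ht
    have hs := hspos t ht0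
    have hq := qf_pos hs
    have hlast : 0 < 3 * qf ρ t - h * (h / qf ρ t - zα) := by
      have e : 3 * qf ρ t - h * (h / qf ρ t - zα)
          = (3*(qf ρ t)^2 + h*zα*(qf ρ t) - h^2) / qf ρ t := by
        field_simp; ring
      rw [e]
      exact div_pos (hQs _ (hqt t ht)) hq
    have h1 : 0 < stdPDF (h / qf ρ t - zα) * (h*ρ^2/4) * ((qf ρ t)⁻¹)^6 := by
      have := stdPDF_pos (h / qf ρ t - zα)
      positivity
    exact mul_pos h1 hlast
  -- monotonicity of g1 on [0, ∞)
  have hcontg1 : ∀ s : Set ℝ, s ⊆ Ici 0 → ContinuousOn (g1 ρ h zα) s := by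
    intro s hsub t ht
    exact ((hasDerivAt_g1 (hspos t (hsub ht))).continuousAt).continuousWithinAt
  have hmono : MonotoneOn (g1 ρ h zα) (Ici 0) := by
    refine monotoneOn_of_deriv_nonneg (convex_Ici 0) (hcontg1 _ le_rfl) ?_ ?_
    · intro t ht
      rw [interior_Ici] at ht
      exact ((hasDerivAt_g1 (hspos t ht.le)).differentiableAt).differentiableWithinAt
    · intro t ht
      rw [interior_Ici] at ht
      rw [(hasDerivAt_g1 (hspos t ht.le)).deriv]
      exact hg2nn t ht.le
  have hg1strict : StrictMonoOn (g1 ρ h zα) (Ici t₀) := by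
    refine strictMonoOn_of_deriv_pos (convex_Ici t₀) (hcontg1 _ (fun x hx => le_trans ht₀0 hx)) ?_
    intro t ht
    rw [interior_Ici] at ht
    rw [(hasDerivAt_g1 (hspos t (le_trans ht₀0 ht.le))).deriv]
    exact hg2pos t ht.le
  -- tangent line function k
  set c : ℝ := g1 ρ h zα 1 with hcdef
  set k : ℝ → ℝ := fun t => gfun ρ h zα t - gfun ρ h zα 1 - c*(t-1) with hkdef
  have hk1 : k 1 = 0 := by simp [hkdef]
  have hkderiv : ∀ t : ℝ, 0 ≤ t → HasDerivAt k (g1 ρ h zα t - c) t := by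
    intro t ht
    have Hg : HasDerivAt (gfun ρ h zα) (g1 ρ h zα t) t := hasDerivAt_gfun (hspos t ht)
    have H := Hg.sub ((((hasDerivAt_id t).sub_const 1).const_mul c).const_add (gfun ρ h zα 1))
    -- careful: k t = gfun t - (gfun 1 + c*(t-1))
    have e : k = fun t => gfun ρ h zα t - (gfun ρ h zα 1 + c * (t - 1)) := by
      funext t; simp [hkdef]; ring
    rw [e]
    refine H.congr_deriv ?_
    ring
  have hcontk : ∀ s : Set ℝ, s ⊆ Ici 0 → ContinuousOn k s := by
    intro s hsub t ht
    exact ((hkderiv t (hsub ht)).continuousAt).continuousWithinAt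
  have hdiffk : ∀ s : Set ℝ, s ⊆ Ici 0 → DifferentiableOn ℝ k s := by
    intro s hsub t ht
    exact ((hkderiv t (hsub ht)).differentiableAt).differentiableWithinAt
  -- k is nonneg on [0, ∞)
  have hknn : ∀ t : ℝ, 0 ≤ t → 0 ≤ k t := by
    have hanti : AntitoneOn k (Icc 0 1) := by
      refine antitoneOn_of_deriv_nonpos (convex_Icc 0 1) (hcontk _ (fun x hx => hx.1)) ?_ ?_
      · rw [interior_Icc]
        exact hdiffk _ (fun x hx => hx.1.le)
      · intro t ht
        rw [interior_Icc] at ht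
        rw [(hkderiv t ht.1.le).deriv]
        have := hmono (mem_Ici.2 ht.1.le) (mem_Ici.2 zero_le_one) ht.2.le
        linarith
    have hmonk : MonotoneOn k (Ici 1) := by
      refine monotoneOn_of_deriv_nonneg (convex_Ici 1)
        (hcontk _ (fun x hx => mem_Ici.2 (le_trans zero_le_one hx))) ?_ ?_
      · rw [interior_Ici]
        exact hdiffk _ (fun x hx => mem_Ici.2 (le_trans zero_le_one (le_of_lt hx)))
      · intro t ht
        rw [interior_Ici] at ht
        rw [(hkderiv t (le_trans zero_le_one ht.le)).deriv]
        have := hmono (mem_Ici.2 zero_le_one) (mem_Ici.2 (le_trans zero_le_one ht.le)) ht.le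
        linarith
    intro t ht
    rcases le_total t 1 with h1 | h1
    · have := hanti (mem_Icc.2 ⟨ht, h1⟩) (mem_Icc.2 ⟨zero_le_one, le_refl 1⟩) h1
      rw [hk1] at this; linarith
    · have := hmonk (mem_Ici.2 le_rfl) (mem_Ici.2 h1) h1
      rw [hk1] at this; linarith
  -- k is strictly increasing on [t₀, ∞)
  have hkstrict : StrictMonoOn k (Ici t₀) := by
    refine strictMonoOn_of_deriv_pos (convex_Ici t₀)
      (hcontk _ (fun x hx => le_trans ht₀0 hx)) ?_
    intro t ht
    rw [interior_Ici] at ht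
    rw [(hkderiv t (le_trans ht₀0 ht.le)).deriv]
    have h1 : g1 ρ h zα t₀ < g1 ρ h zα t := hg1strict (mem_Ici.2 le_rfl) (mem_Ici.2 ht.le) ht
    have h2 : c ≤ g1 ρ h zα t₀ := hmono (mem_Ici.2 zero_le_one) (mem_Ici.2 ht₀0) ht₀1
    linarith
  set eps : ℝ := k (t₀ + 1) with hepsdef
  have heps : 0 < eps := by
    have h1 : k t₀ < k (t₀ + 1) := hkstrict (mem_Ici.2 le_rfl) (mem_Ici.2 (by linarith)) (by linarith)
    have h2 : 0 ≤ k t₀ := hknn t₀ ht₀0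
    simp only [hepsdef]; linarith
  have hklower : ∀ t : ℝ, t₀ + 1 ≤ t → eps ≤ k t := by
    intro t ht
    exact hkstrict.monotoneOn (mem_Ici.2 (by linarith)) (mem_Ici.2 (by linarith [ht])) ht
  -- the set A where k(x²) is at least eps
  set a₁ : ℝ := Real.sqrt (t₀ + 1) with ha₁def
  set a₂ : ℝ := Real.sqrt (t₀ + 2) with ha₂def
  have ha₁pos : 0 < a₁ := Real.sqrt_pos.2 (by linarith)
  have ha₁₂ : a₁ < a₂ := Real.sqrt_lt_sqrt (by linarith) (by linarith)
  have hAlow : ∀ x : ℝ, x ∈ Icc a₁ a₂ → eps ≤ k (x^2) := by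
    intro x hx
    refine hklower _ ?_
    have h1 : a₁^2 ≤ x^2 := by
      have := pow_le_pow_left₀ ha₁pos.le hx.1 2
      exact this
    rw [Real.sq_sqrt (by linarith : (0:ℝ) ≤ t₀+1)] at h1
    exact h1
  -- integration setup
  set γ := gaussianReal 0 1 with hγdef
  set F : ℝ → ℝ := fun x => stdGaussCDF (h / Real.sqrt (ρ * x ^ 2 + 1 - ρ) - zα) with hFdef
  have hFg : ∀ x : ℝ, F x = gfun ρ h zα (x^2) := by
    intro x; rfl
  have hsqrtne : ∀ x : ℝ, Real.sqrt (ρ * x ^ 2 + 1 - ρ) ≠ 0 := by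
    intro x
    refine (Real.sqrt_pos.2 ?_).ne'
    nlinarith [sq_nonneg x]
  have hFcont : Continuous F := by
    refine continuous_stdGaussCDF.comp (Continuous.sub ?_ continuous_const)
    exact continuous_const.div (Real.continuous_sqrt.comp (by fun_prop)) hsqrtne
  have hFint : Integrable F γ := by
    refine MeasureTheory.Integrable.mono' (integrable_const (1:ℝ))
      hFcont.aestronglyMeasurable (Filter.Eventually.of_forall fun x => ?_)
    rw [Real.norm_eq_abs, abs_of_nonneg (stdGaussCDF_nonneg _)]
    exact stdGaussCDF_le_one _
  have hsqint : Integrable (fun x : ℝ => x^2) γ := integrable_sq_gaussianReal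
  set L : ℝ → ℝ := fun x => gfun ρ h zα 1 + c*(x^2 - 1) with hLdef
  have hsub1 : Integrable (fun x : ℝ => x^2 - 1) γ := by
    refine (hsqint.sub (integrable_const 1)).congr (Filter.Eventually.of_forall fun x => ?_)
    simp
  have hLint : Integrable L γ := (integrable_const _).add (hsub1.const_mul c)
  have hLval : ∫ x, L x ∂γ = gfun ρ h zα 1 := by
    have e1 : ∫ x, L x ∂γ = (∫ _x, gfun ρ h zα 1 ∂γ) + ∫ x, c*(x^2-1) ∂γ :=
      integral_add (integrable_const _) (hsub1.const_mul c)
    have e2 : ∫ x, c*(x^2-1) ∂γ = c * ∫ x, (x^2-1) ∂γ := integral_const_mul c _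
    have e3 : ∫ x, (x^2-1 : ℝ) ∂γ = (∫ x, x^2 ∂γ) - ∫ _x, (1:ℝ) ∂γ :=
      integral_sub hsqint (integrable_const 1)
    rw [e1, e2, e3, integral_sq_gaussianReal]
    simp [hγdef]
  have hFL : ∀ x : ℝ, F x = L x + k (x^2) := by
    intro x
    rw [hFg x]
    simp only [hLdef, hkdef]
    ring
  have hkint : Integrable (fun x => k (x^2)) γ := by
    refine (hFint.sub hLint).congr (Filter.Eventually.of_forall fun x => ?_)
    simp only [Pi.sub_apply]
    rw [hFL x]; ring
  have hknn' : ∀ x : ℝ, 0 ≤ k (x^2) := fun x => hknn _ (sq_nonneg x)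
  -- positivity of ∫ k(x²)
  have hkpos : 0 < ∫ x, k (x^2) ∂γ := by
    have hmeas : ((γ (Icc a₁ a₂)).toReal) > 0 := gauss_Icc_pos ha₁₂
    have hlow : eps * (γ (Icc a₁ a₂)).toReal ≤ ∫ x in Icc a₁ a₂, k (x^2) ∂γ := by
      have := MeasureTheory.setIntegral_ge_of_const_le measurableSet_Icc
        (measure_ne_top _ _) hAlow hkint.integrableOn
      rw [smul_eq_mul, measureReal_def, mul_comm] at this; exact this
    have hup : ∫ x in Icc a₁ a₂, k (x^2) ∂γ ≤ ∫ x, k (x^2) ∂γ := by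
      refine MeasureTheory.setIntegral_le_integral hkint
        (Filter.Eventually.of_forall fun x => hknn' x)
    have : 0 < eps * (γ (Icc a₁ a₂)).toReal := mul_pos heps hmeas
    linarith
  -- final assembly
  have hg1eq : gfun ρ h zα 1 = stdGaussCDF (h - zα) := by
    show stdGaussCDF (h / qf ρ 1 - zα) = stdGaussCDF (h - zα)
    rw [show qf ρ 1 = Real.sqrt 1 by unfold qf; norm_num, Real.sqrt_one, div_one]
  have hdecomp : ∫ x, F x ∂γ = gfun ρ h zα 1 + ∫ x, k (x^2) ∂γ := by
    rw [← hLval, ← integral_add hLint hkint]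
    refine integral_congr_ae (Filter.Eventually.of_forall fun x => ?_)
    rw [hFL x]
  have : stdGaussCDF (h - zα) < ∫ x, F x ∂γ := by
    rw [hdecomp, hg1eq]
    linarith
  exact this
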